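/- Let M be the HRQF matrix of an STBC with weight matrices A_1,...,A_K, i.e., m_{ij} = ‖A_i A_j^H + A_j A_i^H‖_F². Then m_{ij} = 0 if and only if the columns h_i and h_j of H_eq are orthogonal for every channel realization H; in particular, the zero pattern of the strictly upper-triangular part of M does not depend on H. -/

import Mathlib

open Matrix Finset Kronecker

/-- The realification `Ȟ` of a complex channel matrix `H`. -/
def checkMat {nr n : ℕ} (H : Matrix (Fin nr) (Fin n) ℂ) :
    Matrix (Fin nr × Fin 2) (Fin n × Fin 2) ℝ := fun p q =>
  if p.2 = 0 then (if q.2 = 0 then (H p.1 q.1).re else -(H p.1 q.1).im)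
  else (if q.2 = 0 then (H p.1 q.1).im else (H p.1 q.1).re)

/-- The generator matrix `G`: its `k`-th column is the realified vectorization of `A_k`. -/
def genMat {n K : ℕ} (A : Fin K → Matrix (Fin n) (Fin n) ℂ) :
    Matrix (Fin n × Fin n × Fin 2) (Fin K) ℝ := fun idx k =>
  if idx.2.2 = 0 then (A k idx.2.1 idx.1).re else (A k idx.2.1 idx.1).im

/-- The equivalent real channel matrix `H_eq = (I_n ⊗ Ȟ)·G`. -/
def heqMat {nr n K : ℕ} (H : Matrix (Fin nr) (Fin n) ℂ)
    (A : Fin K → Matrix (Fin n) (Fin n) ℂ) :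
    Matrix (Fin n × (Fin nr × Fin 2)) (Fin K) ℝ :=
  ((1 : Matrix (Fin n) (Fin n) ℝ) ⊗ₖ checkMat H) * genMat A

lemma heq_apply {nr n K : ℕ} (H : Matrix (Fin nr) (Fin n) ℂ)
    (A : Fin K → Matrix (Fin n) (Fin n) ℂ) (c : Fin n) (r : Fin nr) (s : Fin 2) (k : Fin K) :
    heqMat H A (c, (r, s)) k =
      if s = 0 then ((H * A k) r c).re else ((H * A k) r c).im := by
  simp only [heqMat, Matrix.mul_apply, Fintype.sum_prod_type, kroneckerMap_apply,
    Matrix.one_apply, checkMat, genMat, Matrix.mul_apply, Complex.re_sum, Complex.im_sum,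
    Fin.sum_univ_two]
  simp only [ite_mul, zero_mul, one_mul, Finset.sum_ite_eq, Finset.mem_univ, if_true]
  fin_cases s
  · rw [Finset.sum_comm]
    simp only [Complex.mul_re, Finset.sum_add_distrib, Finset.sum_ite_eq, Finset.mem_univ,
      if_true]
    norm_num
    ring
  · rw [Finset.sum_comm]
    simp only [Complex.mul_im, Finset.sum_add_distrib, Finset.sum_ite_eq, Finset.mem_univ,
      if_true]
    norm_num
    exact add_comm _ _

lemma quad_zero {n : ℕ} (S : Matrix (Fin n) (Fin n) ℂ)
    (h : ∀ v : Fin n → ℂ, ∑ p, ∑ q, v p * S p q * star (v q) = 0) : S = 0 := by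
  have h2 : ∀ x : EuclideanSpace ℂ (Fin n),
      (inner ℂ (Matrix.toEuclideanLin S x) x : ℂ) = 0 := by
    intro x
    have hx := h (fun p => star (x p))
    have : (inner ℂ (Matrix.toEuclideanLin S x) x : ℂ)
        = star (∑ p, ∑ q, star (x p) * S p q * star (star (x q))) := by
      simp only [PiLp.inner_apply, Matrix.toEuclideanLin_apply, Matrix.mulVec,
        dotProduct, RCLike.inner_apply, star_sum, star_mul', star_star,
        map_sum, Finset.sum_mul, Finset.mul_sum, PiLp.toLp_apply]
      exact Finset.sum_congr rfl fun p _ => Finset.sum_congr rfl fun q _ => by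
        simp [mul_comm, mul_left_comm, Complex.star_def]
    rw [this, hx, star_zero]
  have h3 := (inner_map_self_eq_zero (Matrix.toEuclideanLin S)).mp h2
  exact (LinearEquiv.map_eq_zero_iff Matrix.toEuclideanLin).mp h3

lemma re_trace_mul_conjTranspose {nr n : ℕ} (Bi Bj : Matrix (Fin nr) (Fin n) ℂ) :
    (Matrix.trace (Bi * Bjᴴ)).re
      = ∑ c, ∑ r, ((Bi r c).re * (Bj r c).re + (Bi r c).im * (Bj r c).im) := by
  simp only [Matrix.trace, Matrix.diag, Matrix.mul_apply, Matrix.conjTranspose_apply,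
    Complex.re_sum, Complex.mul_re, Complex.star_def, Complex.conj_re, Complex.conj_im]
  rw [Finset.sum_comm]
  exact Finset.sum_congr rfl fun c _ => Finset.sum_congr rfl fun r _ => by ring

lemma inner_eq_trace {nr n K : ℕ} (H : Matrix (Fin nr) (Fin n) ℂ)
    (A : Fin K → Matrix (Fin n) (Fin n) ℂ) (i j : Fin K) :
    ∑ idx, heqMat H A idx i * heqMat H A idx j
      = (Matrix.trace (H * (A i * (A j)ᴴ) * Hᴴ)).re := by
  have hM : H * (A i * (A j)ᴴ) * Hᴴ = (H * A i) * (H * A j)ᴴ := by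
    rw [Matrix.conjTranspose_mul, ← Matrix.mul_assoc, Matrix.mul_assoc]
  rw [hM, re_trace_mul_conjTranspose]
  rw [Fintype.sum_prod_type]
  simp only [Fintype.sum_prod_type, Fin.sum_univ_two, heq_apply]
  norm_num

/-- The HRQF entry `m_{ij} = ‖A_i A_j^H + A_j A_i^H‖_F²` vanishes iff the columns `h_i`
and `h_j` of `H_eq` are orthogonal for every channel realization `H`; in particular the
zero pattern of the HRQF matrix does not depend on the channel. -/
theorem hrqf_zero_iff_columns_orthogonal {nr n K : ℕ} (hnr : 0 < nr)
    (A : Fin K → Matrix (Fin n) (Fin n) ℂ) (i j : Fin K)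
    (m : Fin K → Fin K → ℝ)
    (hm : ∀ i j, m i j =
      ∑ a, ∑ b, Complex.normSq ((A i * (A j)ᴴ + A j * (A i)ᴴ) a b)) :
    m i j = 0 ↔
      ∀ H : Matrix (Fin nr) (Fin n) ℂ,
        ∑ idx, heqMat H A idx i * heqMat H A idx j = 0 := by
  set S : Matrix (Fin n) (Fin n) ℂ := A i * (A j)ᴴ + A j * (A i)ᴴ with hS
  have key : ∀ H : Matrix (Fin nr) (Fin n) ℂ,
      2 * (∑ idx, heqMat H A idx i * heqMat H A idx j)
        = (Matrix.trace (H * S * Hᴴ)).re := by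
    intro H
    have e1 : Matrix.trace (H * S * Hᴴ)
        = Matrix.trace (H * (A i * (A j)ᴴ) * Hᴴ)
          + Matrix.trace (H * (A j * (A i)ᴴ) * Hᴴ) := by
      rw [hS, Matrix.mul_add, Matrix.add_mul, Matrix.trace_add]
    have e2 : Matrix.trace (H * (A j * (A i)ᴴ) * Hᴴ)
        = star (Matrix.trace (H * (A i * (A j)ᴴ) * Hᴴ)) := by
      rw [← Matrix.trace_conjTranspose]
      congr 1
      simp [Matrix.conjTranspose_mul, Matrix.mul_assoc]
    rw [e1, e2, inner_eq_trace]
    simp only [Complex.add_re, Complex.star_def, Complex.conj_re]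
    ring
  constructor
  · intro hmz H
    have hS0 : S = 0 := by
      have hnn : ∀ p ∈ (Finset.univ : Finset (Fin n)),
          0 ≤ ∑ b, Complex.normSq (S p b) :=
        fun p _ => Finset.sum_nonneg fun b _ => Complex.normSq_nonneg _
      have h1 := (Finset.sum_eq_zero_iff_of_nonneg hnn).mp ((hm i j ▸ hmz))
      ext p q
      have h2 := (Finset.sum_eq_zero_iff_of_nonneg
        (fun b _ => Complex.normSq_nonneg (S p b))).mp (h1 p (Finset.mem_univ p)) q
        (Finset.mem_univ q)
      simpa [Complex.normSq_eq_zero] using h2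
    have hk := key H
    rw [hS0] at hk
    simp only [Matrix.mul_zero, Matrix.zero_mul, Matrix.trace_zero, Complex.zero_re] at hk
    linarith
  · intro hH
    have hre : ∀ v : Fin n → ℂ,
        ((∑ p, ∑ q, v p * S p q * star (v q)) : ℂ).re = 0 := by
      intro v
      set H : Matrix (Fin nr) (Fin n) ℂ :=
        Matrix.of (fun r p => if r = (⟨0, hnr⟩ : Fin nr) then v p else 0) with hHdef
      have hrow : ∀ r, (H * S * Hᴴ) r r
          = if r = (⟨0, hnr⟩ : Fin nr) then ∑ p, ∑ q, v p * S p q * star (v q) else 0 := by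
        intro r
        by_cases hr : r = (⟨0, hnr⟩ : Fin nr)
        · simp only [hr, if_true, Matrix.mul_apply, Matrix.conjTranspose_apply, hHdef,
            Matrix.of_apply, Finset.sum_mul]
          rw [Finset.sum_comm]
        · simp [Matrix.mul_apply, hHdef, hr]
      have htr : Matrix.trace (H * S * Hᴴ) = ∑ p, ∑ q, v p * S p q * star (v q) := by
        simp only [Matrix.trace, Matrix.diag, hrow, Finset.sum_ite_eq', Finset.mem_univ,
          if_true]
      have hk := key H
      rw [htr, hH H] at hk
      linarith
    have hherm : Sᴴ = S := by
      rw [hS]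
      simp [Matrix.conjTranspose_add, Matrix.conjTranspose_mul]
      exact add_comm _ _
    have hq : ∀ v : Fin n → ℂ, ∑ p, ∑ q, v p * S p q * star (v q) = 0 := by
      intro v
      set z := ∑ p, ∑ q, v p * S p q * star (v q) with hz
      have hstar : (starRingEnd ℂ) z = z := by
        rw [hz, map_sum, Finset.sum_comm]
        refine Finset.sum_congr rfl fun p _ => ?_
        rw [map_sum]
        refine Finset.sum_congr rfl fun q _ => ?_
        have hpq := congrFun (congrFun hherm q) p
        rw [Matrix.conjTranspose_apply] at hpq
        simp only [Complex.star_def] at hpq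
        simp only [_root_.map_mul, Complex.star_def, Complex.conj_conj]
        rw [hpq]; ring
      have him : z.im = 0 := by
        have h2 := congrArg Complex.im hstar
        simp only [Complex.conj_im] at h2
        linarith
      exact Complex.ext (hre v) him
    have hS0 : S = 0 := quad_zero S hq
    rw [hm i j, ← hS]
    exact Finset.sum_eq_zero fun p _ => Finset.sum_eq_zero fun q _ => by
      rw [hS0]; simp
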